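/- Let S be a numerical semigroup with multiplicity m, conductor c, depth q = ⌈c/m⌉, offset ρ = qm−c, and level function λ. Let A = S \ (m+S) and let C = {z ∈ A : z decomposable, and z = x+y for some nonzero x,y ∈ S with λ(z) < λ(x)+λ(y)}. Then ρ ≥ |C|. -/
import Mathlib


theorem stmt10 (S : Set ℕ)
    (h0 : 0 ∈ S)
    (hadd : ∀ a ∈ S, ∀ b ∈ S, a + b ∈ S)
    (hfin : (Sᶜ : Set ℕ).Finite)
    (m : ℕ) (hm : m ∈ S ∧ m ≠ 0 ∧ ∀ x ∈ S, x ≠ 0 → m ≤ x)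
    (c : ℕ) (hc : (∀ x, c ≤ x → x ∈ S) ∧ ∀ c', (∀ x, c' ≤ x → x ∈ S) → c ≤ c')
    (q ρ : ℕ) (hq : q = (c + m - 1) / m) (hρ : ρ = q * m - c)
    (lvl : ℕ → ℕ) (hlvl : ∀ x, lvl x = (x + ρ) / m)
    (A : Set ℕ) (hA : A = {x ∈ S | ¬ ∃ s ∈ S, x = m + s})
    (C : Set ℕ)
    (hC : C = {z ∈ A | ∃ x ∈ S, ∃ y ∈ S, x ≠ 0 ∧ y ≠ 0 ∧ z = x + y ∧
      lvl z < lvl x + lvl y}) :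
    C.ncard ≤ ρ := by
  obtain ⟨hmS, hm0, hmin⟩ := hm
  have hmpos : 0 < m := Nat.pos_of_ne_zero hm0
  -- closure under adding multiples of m
  have hmul : ∀ z ∈ S, ∀ k : ℕ, z + m * k ∈ S := by
    intro z hz k
    induction k with
    | zero => simpa using hz
    | succ n ih =>
        have := hadd _ ih _ hmS
        have e : z + m * (n + 1) = z + m * n + m := by ring
        rw [e]; exact this
  -- ρ < m
  have hρm : ρ < m := by
    subst hρ hq
    have h1 : (c + m - 1) / m * m ≤ c + m - 1 := Nat.div_mul_le_self _ _
    omega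
  have hdivadd : ∀ a b : ℕ, a / m + b / m ≤ (a + b) / m := by
    intro a b
    rw [Nat.le_div_iff_mul_le hmpos, add_mul]
    have ha := Nat.div_mul_le_self a m
    have hb := Nat.div_mul_le_self b m
    omega
  -- image condition
  have hmem : ∀ z ∈ C, (z + ρ) % m ∈ Set.Ico (m - ρ) m := by
    intro z hzC
    rw [hC] at hzC
    obtain ⟨hzA, x, hx, y, hy, hx0, hy0, hzxy, hlt⟩ := hzC
    refine ⟨?_, Nat.mod_lt _ hmpos⟩
    by_contra hcon
    push_neg at hcon
    have e1 := Nat.div_add_mod (z + ρ) m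
    have hrρ : (z + ρ) % m + ρ < m := by omega
    have e2 : z + 2 * ρ = m * ((z + ρ) / m) + ((z + ρ) % m + ρ) := by omega
    have e3 : (z + 2 * ρ) / m = (z + ρ) / m := by
      rw [e2, Nat.mul_add_div hmpos, Nat.div_eq_of_lt hrρ]; omega
    have h4 : lvl x + lvl y ≤ (z + 2 * ρ) / m := by
      rw [hlvl, hlvl]
      have := hdivadd (x + ρ) (y + ρ)
      have e : x + ρ + (y + ρ) = z + 2 * ρ := by omega
      rwa [e] at this
    rw [hlvl] at hlt
    rw [e3] at h4
    omega
  -- distinct residues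
  have key : ∀ w1 ∈ C, ∀ w2 ∈ C, (w1 + ρ) % m = (w2 + ρ) % m → w1 < w2 → False := by
    intro w1 h1 w2 h2 heq hlt
    rw [hC] at h1 h2
    have h1A := h1.1
    have h2A := h2.1
    rw [hA] at h1A h2A
    have hmod : w1 ≡ w2 [MOD m] := Nat.ModEq.add_right_cancel' ρ heq
    have hdvd : m ∣ w2 - w1 := (Nat.modEq_iff_dvd' (le_of_lt hlt)).mp hmod
    obtain ⟨k, hk⟩ := hdvd
    have hk0 : k ≠ 0 := by
      rintro rfl; simp at hk; omega
    obtain ⟨k', rfl⟩ := Nat.exists_eq_succ_of_ne_zero hk0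
    have hs : w1 + m * k' ∈ S := hmul _ h1A.1 k'
    have hk2 : w2 - w1 = m * k' + m := by rw [hk, Nat.succ_eq_add_one]; ring
    exact h2A.2 ⟨w1 + m * k', hs, by omega⟩
  have hinj : Set.InjOn (fun z => (z + ρ) % m) C := by
    intro z1 h1 z2 h2 heq
    rcases lt_trichotomy z1 z2 with h | h | h
    · exact absurd (key z1 h1 z2 h2 heq h) (fun x => x)
    · exact h
    · exact absurd (key z2 h2 z1 h1 heq.symm h) (fun x => x)
  calc C.ncard ≤ (Set.Ico (m - ρ) m).ncard :=
        Set.ncard_le_ncard_of_injOn _ hmem hinj (Set.finite_Ico _ _)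
    _ = ρ := by
        rw [← Finset.coe_Ico, Set.ncard_coe_finset, Nat.card_Ico]
        omega
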